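/- Lemma 3 (hypergraph form): Let H be a k-uniform hypergraph on a finite vertex set V with edge set E, and let v_i, v_j ∈ V be vertices with d(v_i) ≥ d(v_j). Suppose e ∈ E with v_j ∈ e and v_i ∉ e, set e' = (e \ {v_j}) ∪ {v_i}, and assume e' ∉ E. Let H' be the hypergraph on V with edge set (E \ {e}) ∪ {e'}. Then h(H) < h(H'), where h(H) = Σ_{v ∈ V} d_H(v)·log₂ d_H(v) and h(H') = Σ_{v ∈ V} d_{H'}(v)·log₂ d_{H'}(v). -/

import Mathlib

open Finset

/-- Degree of a vertex in a hypergraph given by its edge set. -/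
def hdeg {V : Type*} [DecidableEq V] (E : Finset (Finset V)) (v : V) : ℕ :=
  (E.filter (fun e => v ∈ e)).card

/-- `h(H) = Σ_{v ∈ V} d(v)·log₂ d(v)`. -/
noncomputable def hval {V : Type*} [Fintype V] [DecidableEq V]
    (E : Finset (Finset V)) : ℝ :=
  ∑ v : V, (hdeg E v : ℝ) * Real.logb 2 (hdeg E v)

lemma mul_log_increment_lt {b a : ℝ} (hb : 0 ≤ b) (hba : b + 1 ≤ a) :
    (b+1) * Real.log (b+1) - b * Real.log b
      < (a+1) * Real.log (a+1) - a * Real.log a := by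
  have hf := Real.strictConvexOn_mul_log
  have hbmem : b ∈ Set.Ici (0:ℝ) := hb
  have hb1mem : b + 1 ∈ Set.Ici (0:ℝ) := by simp [Set.mem_Ici]; linarith
  have hamem : a ∈ Set.Ici (0:ℝ) := by simp [Set.mem_Ici]; linarith
  have ha1mem : a + 1 ∈ Set.Ici (0:ℝ) := by simp [Set.mem_Ici]; linarith
  rcases eq_or_lt_of_le hba with h | h
  · subst h
    have := hf.slope_strict_mono_adjacent hbmem ha1mem
      (show b < b + 1 by linarith) (show b + 1 < b + 1 + 1 by linarith)
    simp only [add_sub_cancel_left, div_one] at this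
    convert this using 2 <;> ring
  · have h1 := hf.slope_strict_mono_adjacent hbmem hamem
      (show b < b + 1 by linarith) h
    have h2 := hf.slope_strict_mono_adjacent hb1mem ha1mem h
      (show a < a + 1 by linarith)
    simp only [add_sub_cancel_left, div_one] at h1 h2
    linarith [h1.trans h2]

lemma key_logb (b a : ℕ) (h : b + 1 ≤ a) :
    ((b:ℝ)+1) * Real.logb 2 ((b:ℝ)+1) - (b:ℝ) * Real.logb 2 (b:ℝ)
      < ((a:ℝ)+1) * Real.logb 2 ((a:ℝ)+1) - (a:ℝ) * Real.logb 2 (a:ℝ) := by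
  have hlog2 : 0 < Real.log 2 := Real.log_pos one_lt_two
  have h' := mul_log_increment_lt (b := (b:ℝ)) (a := (a:ℝ)) (Nat.cast_nonneg b)
    (by exact_mod_cast h)
  simp only [Real.logb]
  rw [show ((b:ℝ)+1) * (Real.log ((b:ℝ)+1) / Real.log 2)
      - (b:ℝ) * (Real.log (b:ℝ) / Real.log 2)
      = (((b:ℝ)+1) * Real.log ((b:ℝ)+1) - (b:ℝ) * Real.log (b:ℝ)) / Real.log 2 by ring,
    show ((a:ℝ)+1) * (Real.log ((a:ℝ)+1) / Real.log 2)
      - (a:ℝ) * (Real.log (a:ℝ) / Real.log 2)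
      = (((a:ℝ)+1) * Real.log ((a:ℝ)+1) - (a:ℝ) * Real.log (a:ℝ)) / Real.log 2 by ring]
  exact div_lt_div_of_pos_right h' hlog2

lemma hdeg_insert {V : Type*} [DecidableEq V] (A : Finset (Finset V))
    (f : Finset V) (hf : f ∉ A) (v : V) :
    hdeg (insert f A) v = hdeg A v + (if v ∈ f then 1 else 0) := by
  unfold hdeg
  rw [Finset.filter_insert]
  split_ifs with h
  · rw [Finset.card_insert_of_notMem (fun hm => hf (Finset.mem_filter.mp hm).1)]
  · simp

/-- Lemma 3 (hypergraph form): moving the edge `e` from `v_j` to `v_i`, where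
`d(v_i) ≥ d(v_j)`, strictly increases `h`. -/
theorem stmt_3 {V : Type*} [Fintype V] [DecidableEq V] (k : ℕ) (hk : 3 ≤ k)
    (E : Finset (Finset V)) (hunif : ∀ e ∈ E, e.card = k)
    (vi vj : V) (hdij : hdeg E vj ≤ hdeg E vi)
    (e : Finset V) (he : e ∈ E) (hvj : vj ∈ e) (hvi : vi ∉ e)
    (hnew : insert vi (e.erase vj) ∉ E) :
    hval E < hval ((E.erase e) ∪ {insert vi (e.erase vj)}) := by
  classical
  set e' := insert vi (e.erase vj) with he'def
  set A := E.erase e with hAdef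
  have hne : vi ≠ vj := fun h => hvi (h ▸ hvj)
  have heA : e ∉ A := Finset.notMem_erase e E
  have he'A : e' ∉ A := fun h => hnew (Finset.erase_subset e E h)
  have hE : E = insert e A := (Finset.insert_erase he).symm
  have hE' : (E.erase e) ∪ {e'} = insert e' A := by
    rw [Finset.union_comm, ← Finset.insert_eq]
  -- membership facts for e'
  have hvie' : vi ∈ e' := Finset.mem_insert_self _ _
  have hvje' : vj ∉ e' := by
    simp [he'def, Finset.mem_insert, Finset.mem_erase, hne.symm]
  have hother : ∀ v : V, v ≠ vi → v ≠ vj → (v ∈ e' ↔ v ∈ e) := by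
    intro v hvi' hvj'
    simp [he'def, Finset.mem_insert, Finset.mem_erase, hvi', hvj']
  -- degree facts
  have hdE : ∀ v, hdeg E v = hdeg A v + (if v ∈ e then 1 else 0) := by
    intro v; rw [hE]; exact hdeg_insert A e heA v
  have hdE' : ∀ v, hdeg ((E.erase e) ∪ {e'}) v
      = hdeg A v + (if v ∈ e' then 1 else 0) := by
    intro v; rw [hE']; exact hdeg_insert A e' he'A v
  set a := hdeg A vi with hadef
  set b := hdeg A vj with hbdef
  have hEvi : hdeg E vi = a := by rw [hdE]; simp [hvi, hadef]
  have hEvj : hdeg E vj = b + 1 := by rw [hdE]; simp [hvj, hbdef]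
  have hE'vi : hdeg ((E.erase e) ∪ {e'}) vi = a + 1 := by rw [hdE']; simp [hvie', hadef]
  have hE'vj : hdeg ((E.erase e) ∪ {e'}) vj = b := by rw [hdE']; simp [hvje', hbdef]
  have hba : b + 1 ≤ a := by rw [← hEvj, ← hEvi]; exact hdij
  -- the difference of hval
  have hsum : hval ((E.erase e) ∪ {e'}) - hval E
      = (((a:ℝ)+1) * Real.logb 2 ((a:ℝ)+1) - (a:ℝ) * Real.logb 2 (a:ℝ))
        - (((b:ℝ)+1) * Real.logb 2 ((b:ℝ)+1) - (b:ℝ) * Real.logb 2 (b:ℝ)) := by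
    unfold hval
    rw [← Finset.sum_sub_distrib]
    rw [← Finset.sum_subset (Finset.subset_univ ({vi, vj} : Finset V))
      (by
        intro v _ hv
        simp only [Finset.mem_insert, Finset.mem_singleton, not_or] at hv
        have : hdeg ((E.erase e) ∪ {e'}) v = hdeg E v := by
          rw [hdE, hdE']
          simp [hother v hv.1 hv.2]
        rw [this]; ring)]
    rw [Finset.sum_pair hne]
    rw [hEvi, hEvj, hE'vi, hE'vj]
    push_cast
    ring
  have hkey := key_logb b a hba
  linarith
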